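/- There exist constants η > 0, C > 0, and an integer h₀ such that for every integer h ≥ h₀ and every real δ with exp(−ηh) ≤ δ and hδ ≤ 3, setting k = ⌊h/3⌋, one has (1/k!)·(log((3−(k−1)δ)/((h−k+1)δ)))^k ≤ C·2^(−h)/√h. -/

import Mathlib

set_option maxHeartbeats 1600000 in
/-- There are constants `η > 0`, `C > 0` and an integer `h₀` such that
for every integer `h ≥ h₀` and every real `δ` with `exp(−ηh) ≤ δ` and `hδ ≤ 3`, setting
`k = ⌊h/3⌋`, one has `(1/k!)·(log((3−(k−1)δ)/((h−k+1)δ)))^k ≤ C·2^(−h)/√h`. -/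
theorem first_estimate_beats_two_pow :
    ∃ η : ℝ, 0 < η ∧ ∃ C : ℝ, 0 < C ∧ ∃ h₀ : ℕ, ∀ h : ℕ, h₀ ≤ h →
      ∀ δ : ℝ, Real.exp (-η * h) ≤ δ → (h : ℝ) * δ ≤ 3 →
        (1 / ((h / 3).factorial : ℝ)) *
            (Real.log ((3 - ((h / 3 : ℕ) - 1 : ℝ) * δ) /
              (((h : ℝ) - ((h / 3 : ℕ) : ℝ) + 1) * δ))) ^ (h / 3)
          ≤ C * 2 ^ (-(h : ℝ)) / Real.sqrt h := by
  refine ⟨1/25000, by norm_num, 1000, by norm_num, 100000, fun h hh δ hδ1 hδ2 => ?_⟩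
  obtain ⟨k, hkdef⟩ : ∃ k, k = h / 3 := ⟨_, rfl⟩
  rw [← hkdef]
  have hk1 : 1 ≤ k := by omega
  have hk3 : 3 * k ≤ h := by omega
  have hk3' : h ≤ 3 * k + 2 := by omega
  have hkh : k ≤ h := by omega
  -- real casts
  have hhR : (100000 : ℝ) ≤ h := by exact_mod_cast hh
  have hkR1 : (1 : ℝ) ≤ k := by exact_mod_cast hk1
  have hkR3 : 3 * (k : ℝ) ≤ h := by exact_mod_cast hk3
  have hkR3' : (h : ℝ) ≤ 3 * k + 2 := by exact_mod_cast hk3'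
  have hkhR : (k : ℝ) ≤ h := by exact_mod_cast hkh
  have hδpos : 0 < δ := lt_of_lt_of_le (Real.exp_pos _) hδ1
  -- numerator bounds
  have hkδ : (k : ℝ) * δ ≤ 1 := by nlinarith
  have hnum2 : (2 : ℝ) ≤ 3 - ((k : ℝ) - 1) * δ := by nlinarith
  have hnum3 : (3 : ℝ) - ((k : ℝ) - 1) * δ ≤ 3 := by nlinarith
  -- denominator bounds
  have hden1 : (1 : ℝ) ≤ (h : ℝ) - k + 1 := by linarith
  have hdenpos : 0 < ((h : ℝ) - k + 1) * δ := by positivity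
  have hdenub : ((h : ℝ) - k + 1) * δ ≤ 3 := by nlinarith
  have hdenlb : Real.exp (-(1/25000) * h) ≤ ((h : ℝ) - k + 1) * δ := by nlinarith
  set L := Real.log ((3 - ((k : ℕ) - 1 : ℝ) * δ) / (((h : ℝ) - (k : ℝ) + 1) * δ)) with hL
  -- bound on |L|
  have hxpos : 0 < (3 - ((k : ℕ) - 1 : ℝ) * δ) / (((h : ℝ) - (k : ℝ) + 1) * δ) := by
    apply div_pos (by linarith) hdenpos
  have hLub : L ≤ 2 + (1/25000) * h := by
    have h1 : (3 - ((k : ℕ) - 1 : ℝ) * δ) / (((h : ℝ) - (k : ℝ) + 1) * δ)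
        ≤ 3 * Real.exp ((1/25000) * h) := by
      rw [div_le_iff₀ hdenpos]
      have hexp1 : Real.exp ((1/25000) * h) * Real.exp (-(1/25000) * h) = 1 := by
        rw [← Real.exp_add]; ring_nf; exact Real.exp_zero
      nlinarith [Real.exp_pos ((1/25000) * (h:ℝ)), Real.exp_pos (-(1/25000) * (h:ℝ)),
        mul_le_mul_of_nonneg_left hdenlb (le_of_lt (Real.exp_pos ((1/25000) * (h:ℝ))))]
    calc L ≤ Real.log (3 * Real.exp ((1/25000) * h)) := Real.log_le_log hxpos h1
      _ = Real.log 3 + (1/25000) * h := by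
          rw [Real.log_mul (by norm_num) (Real.exp_ne_zero _), Real.log_exp]
      _ ≤ 2 + (1/25000) * h := by
          have : Real.log 3 ≤ 2 := by
            rw [show (2:ℝ) = Real.log (Real.exp 2) by rw [Real.log_exp]]
            apply Real.log_le_log (by norm_num)
            have := Real.add_one_le_exp (2 : ℝ)
            linarith
          linarith
  have hLlb : -(2 + (1/25000) * h) ≤ L := by
    have h1 : (2 : ℝ)/3 ≤ (3 - ((k : ℕ) - 1 : ℝ) * δ) / (((h : ℝ) - (k : ℝ) + 1) * δ) := by
      rw [div_le_div_iff₀ (by norm_num) hdenpos]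
      nlinarith
    have h2 : Real.log ((2:ℝ)/3) ≤ L := Real.log_le_log (by norm_num) h1
    have h3 : -1 ≤ Real.log ((2:ℝ)/3) := by
      rw [show (-1:ℝ) = Real.log (Real.exp (-1)) by rw [Real.log_exp]]
      apply Real.log_le_log (Real.exp_pos _)
      have h4 : Real.exp (-1 : ℝ) ≤ 1/2 := by
        rw [Real.exp_neg, inv_le_comm₀ (Real.exp_pos _) (by norm_num)] at *
        have := Real.add_one_le_exp (1 : ℝ)
        linarith [Real.add_one_le_exp (1:ℝ)]
      linarith
    have hη : (0:ℝ) ≤ (1/25000) * h := by positivity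
    linarith
  have habs : |L| ≤ 2 + (1/25000) * h := abs_le.mpr ⟨hLlb, hLub⟩
  -- pow bound
  have hM : (0:ℝ) ≤ 2 + (1/25000) * h := by positivity
  have hpow : L ^ k ≤ (2 + (1/25000) * h) ^ k := by
    calc L ^ k ≤ |L ^ k| := le_abs_self _
      _ = |L| ^ k := abs_pow L k
      _ ≤ (2 + (1/25000) * h) ^ k := pow_le_pow_left₀ (abs_nonneg _) habs k
  -- factorial bound : k^k / k! ≤ exp k
  have hfac : (k : ℝ) ^ k / (k.factorial : ℝ) ≤ Real.exp k :=
    Real.pow_div_factorial_le_exp (k : ℝ) (by positivity) k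
  have hfacpos : (0:ℝ) < (k.factorial : ℝ) := by exact_mod_cast k.factorial_pos
  have hinvfac : 1 / (k.factorial : ℝ) ≤ Real.exp k / (k : ℝ) ^ k := by
    rw [div_le_div_iff₀ hfacpos (by positivity)]
    rw [div_le_iff₀ hfacpos] at hfac
    linarith
  have hkpos : (0:ℝ) < (k:ℝ) := by linarith
  -- key numeric bound : exp 1 * (2 + h/25000) ≤ k / 1000
  have he : Real.exp 1 < 2.7182818286 := Real.exp_one_lt_d9
  have hkey : Real.exp 1 * (2 + (1/25000) * h) ≤ (k : ℝ) / 1000 := by nlinarith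
  -- assemble : LHS ≤ (1/1000)^k
  have hexpk : Real.exp (k : ℝ) = Real.exp 1 ^ k := by
    rw [← Real.exp_nat_mul]; norm_num
  have hkpow : (0:ℝ) < (k : ℝ) ^ k := by positivity
  have step1 : (1 / (k.factorial : ℝ)) * L ^ k ≤ (Real.exp 1 * (2 + (1/25000) * h) / k) ^ k := by
    calc (1 / (k.factorial : ℝ)) * L ^ k
        ≤ (1 / (k.factorial : ℝ)) * (2 + (1/25000) * h) ^ k := by
          apply mul_le_mul_of_nonneg_left hpow (by positivity)
      _ ≤ (Real.exp k / (k : ℝ) ^ k) * (2 + (1/25000) * h) ^ k := by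
          apply mul_le_mul_of_nonneg_right hinvfac (by positivity)
      _ = (Real.exp 1 * (2 + (1/25000) * h) / k) ^ k := by
          rw [hexpk, div_pow, mul_pow, mul_div_assoc]
          ring
  have step2 : (Real.exp 1 * (2 + (1/25000) * h) / k) ^ k ≤ ((1:ℝ)/1000) ^ k := by
    apply pow_le_pow_left₀ (by positivity)
    rw [div_le_div_iff₀ hkpos (by norm_num)]
    nlinarith [Real.exp_pos 1]
  -- (1/1000)^k ≤ 1000 / 10^h
  have hnat : (10:ℕ) ^ h ≤ 1000 ^ (k + 1) := by
    calc (10:ℕ) ^ h ≤ 10 ^ (3 * k + 3) := Nat.pow_le_pow_right (by norm_num) (by omega)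
      _ = 1000 ^ (k + 1) := by rw [show 3*k+3 = 3*(k+1) by ring, pow_mul]; norm_num
  have hnatR : (10:ℝ) ^ h ≤ 1000 ^ (k + 1) := by exact_mod_cast hnat
  have step3 : ((1:ℝ)/1000) ^ k ≤ 1000 / 10 ^ h := by
    rw [div_pow, one_pow, div_le_div_iff₀ (by positivity) (by positivity)]
    calc (1:ℝ) * 10 ^ h = 10 ^ h := by ring
      _ ≤ 1000 ^ (k+1) := hnatR
      _ = 1000 * 1000 ^ k := by rw [pow_succ]; ring
  -- 1000 / 10^h ≤ 1000 * 2^(-h) / sqrt h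
  have hsq : Real.sqrt h ≤ 5 ^ h := by
    calc Real.sqrt h ≤ h := by
          have hs := Real.sq_sqrt (show (0:ℝ) ≤ h by positivity)
          have hs0 := Real.sqrt_nonneg (h:ℝ)
          nlinarith
      _ ≤ 2 ^ h := by exact_mod_cast (Nat.lt_two_pow_self (n := h)).le
      _ ≤ 5 ^ h := by apply pow_le_pow_left₀ (by norm_num) (by norm_num)
  have hsqpos : 0 < Real.sqrt h := Real.sqrt_pos.mpr (by linarith)
  have step4 : (1000:ℝ) / 10 ^ h ≤ 1000 * 2 ^ (-(h:ℝ)) / Real.sqrt h := by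
    rw [Real.rpow_neg (by norm_num), Real.rpow_natCast]
    rw [div_le_div_iff₀ (by positivity) hsqpos]
    have h10 : (10:ℝ) ^ h = 2 ^ h * 5 ^ h := by
      rw [← mul_pow]; norm_num
    calc (1000:ℝ) * Real.sqrt h ≤ 1000 * 5 ^ h := by
          apply mul_le_mul_of_nonneg_left hsq (by norm_num)
      _ = 1000 * ((2:ℝ) ^ h)⁻¹ * (2 ^ h * 5 ^ h) := by
          field_simp
      _ = 1000 * ((2:ℝ) ^ h)⁻¹ * 10 ^ h := by rw [h10]
  calc (1 / (k.factorial : ℝ)) * L ^ k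
      ≤ (Real.exp 1 * (2 + (1/25000) * h) / k) ^ k := step1
    _ ≤ ((1:ℝ)/1000) ^ k := step2
    _ ≤ 1000 / 10 ^ h := step3
    _ ≤ 1000 * 2 ^ (-(h:ℝ)) / Real.sqrt h := step4
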